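/- arXiv:1810.11404 — 5 statements merged into one kernel-verified Lean document; each statement's English description precedes it below -/
import Mathlib

section
/- Let E be a system of m monotone fixpoint equations over a complete lattice L, with i-th equation xᵢ =_{ηᵢ} fᵢ(x₁,…,x_m) where ηᵢ ∈ {μ,ν}, and let sol(E) be defined recursively by solving the last equation parametrically. Then for every index i, the function g : L → L^{m-1} given by g(x) = sol(E[xᵢ := x]) (the solution of the (m−1)-equation system obtained by deleting the i-th equation and substituting x for xᵢ) is monotone. -/
/-- The solution of a system of `m` fixpoint equations `xᵢ =_{ηᵢ} fᵢ(x₁,…,x_m)` over a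
complete lattice, defined recursively: the last equation is solved parametrically; the
flag `η i = true` means a greatest-fixpoint (ν) equation and `η i = false` a
least-fixpoint (μ) equation, with `μ g = ⨅ {l | g l ≤ l}` and `ν g = ⨆ {l | l ≤ g l}`. -/
def solSystem {L : Type*} [CompleteLattice L] :
    (m : ℕ) → (Fin m → Bool) → (Fin m → (Fin m → L) → L) → Fin m → L
  | 0, _, _ => Fin.elim0
  | m + 1, η, f =>
      let sub : L → Fin m → L := fun x =>
        solSystem m (fun j => η j.castSucc) (fun j v => f j.castSucc (Fin.snoc v x))
      let g : L → L := fun x => f (Fin.last m) (Fin.snoc (sub x) x)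
      let u : L :=
        if η (Fin.last m) = true then sSup {l : L | l ≤ g l} else sInf {l : L | g l ≤ l}
      Fin.snoc (sub u) u

private lemma snoc_le_snoc {L : Type*} [CompleteLattice L] {m : ℕ}
    {v w : Fin m → L} {x y : L} (hv : v ≤ w) (hx : x ≤ y) :
    (Fin.snoc v x : Fin (m + 1) → L) ≤ Fin.snoc w y := by
  intro j
  induction j using Fin.lastCases with
  | last => simpa using hx
  | cast j => simpa using hv j

private lemma solSystem_le_solSystem {L : Type*} [CompleteLattice L] :
    ∀ (m : ℕ) (η : Fin m → Bool) (f g : Fin m → (Fin m → L) → L),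
      (∀ i v w, v ≤ w → f i v ≤ g i w) →
      solSystem m η f ≤ solSystem m η g
  | 0, _, _, _, _ => by intro j; exact j.elim0
  | m + 1, η, f, g, hfg => by
      simp only [solSystem]
      set subf : L → Fin m → L := fun x =>
        solSystem m (fun j => η j.castSucc) (fun j v => f j.castSucc (Fin.snoc v x)) with hsubf
      set subg : L → Fin m → L := fun x =>
        solSystem m (fun j => η j.castSucc) (fun j v => g j.castSucc (Fin.snoc v x)) with hsubg
      have hsub : ∀ x y : L, x ≤ y → subf x ≤ subg y := by
        intro x y hxy
        exact solSystem_le_solSystem m _ _ _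
          (fun j v w hvw => hfg _ _ _ (snoc_le_snoc hvw hxy))
      set Gf : L → L := fun x => f (Fin.last m) (Fin.snoc (subf x) x) with hGf
      set Gg : L → L := fun x => g (Fin.last m) (Fin.snoc (subg x) x) with hGg
      have hG : ∀ x, Gf x ≤ Gg x := fun x =>
        hfg _ _ _ (snoc_le_snoc (hsub x x le_rfl) le_rfl)
      have hu :
          (if η (Fin.last m) = true then sSup {l : L | l ≤ Gf l} else sInf {l : L | Gf l ≤ l}) ≤
          (if η (Fin.last m) = true then sSup {l : L | l ≤ Gg l} else sInf {l : L | Gg l ≤ l}) := by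
        split
        · exact sSup_le_sSup (fun l hl => le_trans hl (hG l))
        · exact sInf_le_sInf (fun l hl => le_trans (hG l) hl)
      exact snoc_le_snoc (hsub _ _ hu) hu

private lemma insertNth_le_insertNth {L : Type*} [CompleteLattice L] {m : ℕ}
    (i : Fin (m + 1)) {x y : L} {v w : Fin m → L} (hx : x ≤ y) (hv : v ≤ w) :
    (Fin.insertNth i x v : Fin (m + 1) → L) ≤ Fin.insertNth i y w := by
  intro j
  rcases eq_or_ne j i with rfl | hji
  · simpa using hx
  · obtain ⟨k, rfl⟩ := Fin.exists_succAbove_eq hji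
    simpa using hv k

/-- For a system `E` of `m+1` monotone fixpoint equations over a complete lattice `L`
and any index `i`, the function `g : L → L^m` mapping `x` to the solution of the
system `E[xᵢ := x]` (obtained by deleting the `i`-th equation and substituting `x`
for `xᵢ`) is monotone. -/
theorem solSystem_subst_monotone {L : Type*} [CompleteLattice L] (m : ℕ)
    (η : Fin (m + 1) → Bool) (f : Fin (m + 1) → (Fin (m + 1) → L) → L)
    (hf : ∀ i, Monotone (f i)) (i : Fin (m + 1)) :
    Monotone (fun x : L =>
      solSystem m (fun j => η (i.succAbove j))
        (fun j v => f (i.succAbove j) (Fin.insertNth i x v))) := by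
  intro x y hxy
  exact solSystem_le_solSystem m _ _ _
    (fun j v w hvw => hf _ (insertNth_le_insertNth i hxy hvw))
end

section
/- Correctness of the single-equation fixpoint game for ν: Let L be a continuous lattice with basis B_L (with ⊥ ∉ B_L), f : L → L monotone, and b ∈ B_L with b ⋢ f^β(⊤) for some ordinal β. Then in the game where from b player ∃ chooses l with b ⊑ f(l) and from l player ∀ chooses b' ∈ B_L with b' ≪ l (∀ winning infinite plays being impossible here; rather ∀ wins by forcing a failure of ∃), player ∀ has a winning strategy; in particular, for any l with b ⊑ f(l) there exists b' ∈ B_L with b' ≪ l and b' ⋢ f^γ(⊤) for some γ < β (or γ with γ+1 ≤ β). -/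
/-- The way-below relation in a complete lattice. -/
def wayBelow {L : Type*} [CompleteLattice L] (a b : L) : Prop :=
  ∀ D : Set L, D.Nonempty → DirectedOn (· ≤ ·) D → b ≤ sSup D → ∃ d ∈ D, a ≤ d

/-- The transfinite iterates `f^α(⊤)`: `f^0(⊤) = ⊤`, `f^(α+1)(⊤) = f (f^α(⊤))`, and
`f^α(⊤) = ⨅_{β<α} f^β(⊤)` at limit ordinals. -/
noncomputable def topIter {L : Type*} [CompleteLattice L] (f : L → L) (o : Ordinal) : L :=
  Ordinal.limitRecOn o ⊤ (fun _ ih => f ih)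
    (fun o _ ih => ⨅ p : Set.Iio o, ih p.1 p.2)

lemma topIter_zero {L : Type*} [CompleteLattice L] (f : L → L) :
    topIter f 0 = ⊤ := by simp [topIter]

lemma topIter_succ {L : Type*} [CompleteLattice L] (f : L → L) (o : Ordinal) :
    topIter f (Order.succ o) = f (topIter f o) := by simp [topIter]

lemma topIter_limit {L : Type*} [CompleteLattice L] (f : L → L) (o : Ordinal)
    (ho : Order.IsSuccLimit o) : topIter f o = ⨅ p : Set.Iio o, topIter f p.1 := by
  simp [topIter, Ordinal.limitRecOn_limit _ _ _ _ ho]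

/-- Key lattice step: if `l ⋢ m` in a continuous lattice with basis `B`, there is a
basis element way below `l` that is not below `m`. -/
lemma exists_basis_wayBelow_not_le {L : Type*} [CompleteLattice L] (B : Set L)
    (hcont : ∀ l : L, l = sSup {l' : L | wayBelow l' l})
    (hbasis : ∀ l : L, l = sSup {b | b ∈ B ∧ b ≤ l})
    {l m : L} (h : ¬ l ≤ m) :
    ∃ b' ∈ B, wayBelow b' l ∧ ¬ b' ≤ m := by
  by_contra hcon
  push_neg at hcon
  apply h
  have h1 : l ≤ sSup {b' | b' ∈ B ∧ wayBelow b' l} := by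
    calc l = sSup {l' : L | wayBelow l' l} := hcont l
    _ ≤ sSup {b' | b' ∈ B ∧ wayBelow b' l} := by
        apply sSup_le
        intro l' hl'
        calc l' = sSup {b | b ∈ B ∧ b ≤ l'} := hbasis l'
        _ ≤ _ := by
            apply sSup_le
            rintro b ⟨hbB, hble⟩
            refine le_sSup ⟨hbB, fun D hD hdir hle => ?_⟩
            obtain ⟨d, hd, hld⟩ := hl' D hD hdir hle
            exact ⟨d, hd, hble.trans hld⟩
  calc l ≤ sSup {b' | b' ∈ B ∧ wayBelow b' l} := h1
  _ ≤ m := sSup_le fun b' ⟨hB, hwb⟩ => hcon b' hB hwb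

/-- Correctness of the single-equation fixpoint game for ν: if `L` is a continuous
lattice with basis `B` (with `⊥ ∉ B`), `f : L → L` is monotone and `b ∈ B` satisfies
`b ⋢ f^β(⊤)` for some ordinal `β`, then for any move `l` of the existential player
(i.e. any `l` with `b ⊑ f(l)`), the universal player has an answer: there exist
`b' ∈ B` with `b' ≪ l` and an ordinal `γ < β` (equivalently `γ + 1 ≤ β`) such that
`b' ⋢ f^γ(⊤)`. -/
theorem nu_game_correctness_step {L : Type*} [CompleteLattice L] (B : Set L)
    (hcont : ∀ l : L, l = sSup {l' : L | wayBelow l' l})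
    (hbasis : ∀ l : L, l = sSup {b | b ∈ B ∧ b ≤ l})
    (hbot : (⊥ : L) ∉ B)
    (f : L → L) (hf : Monotone f)
    (b : L) (hb : b ∈ B) (β : Ordinal) (hβ : ¬ b ≤ topIter f β) :
    ∀ l : L, b ≤ f l →
      ∃ b' ∈ B, wayBelow b' l ∧ ∃ γ : Ordinal, γ < β ∧ ¬ b' ≤ topIter f γ := by
  intro l hbl
  -- take the least ordinal β₀ with ¬ b ≤ topIter f β₀
  obtain ⟨β₀, hβ₀, hmin⟩ := wellFounded_lt.has_min {α : Ordinal | ¬ b ≤ topIter f α} ⟨β, hβ⟩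
  have hβ₀β : β₀ ≤ β := not_lt.mp (fun h => hmin β hβ h)
  have hlt : ∀ γ < β₀, b ≤ topIter f γ := by
    intro γ hγ
    by_contra hcg
    exact hmin γ hcg hγ
  rcases Ordinal.zero_or_succ_or_isSuccLimit β₀ with h0 | ⟨γ, hγ⟩ | hlim
  · exact absurd (h0 ▸ (topIter_zero f ▸ le_top : b ≤ topIter f 0)) hβ₀
  · have hγlt : γ < β₀ := hγ ▸ Order.lt_succ γ
    have hnle : ¬ l ≤ topIter f γ := by
      intro hle
      apply hβ₀
      rw [← hγ, topIter_succ]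
      exact hbl.trans (hf hle)
    obtain ⟨b', hb'B, hwb, hnle'⟩ := exists_basis_wayBelow_not_le B hcont hbasis hnle
    exact ⟨b', hb'B, hwb, γ, hγlt.trans_le hβ₀β, hnle'⟩
  · exfalso
    apply hβ₀
    rw [topIter_limit f β₀ hlim]
    exact le_iInf fun p => hlt p.1 p.2
end

section
/- Let L be a non-continuous complete lattice and B_L a basis with ⊥ ∉ B_L. Then there exists a monotone function f : L → L and a basis element b ∈ B_L such that b ⋢ μf, yet b ⊑ f(l) for l = ⨆{l' | l' ≪ l₀} where l₀ witnesses non-continuity, and every b' ∈ B_L with b' ≪ l satisfies b' ⊑ μf. Concretely: take l₀ with ⨆↡l₀ ⊏ l₀, define f(x) = ⨆↡l₀ if x ⊑ ⨆↡l₀ and f(x) = ⊤ otherwise; then f is monotone, μf = ⨆↡l₀, and there is b ∈ B_L with b ⊑ l₀ and b ⋢ μf. -/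
open scoped Classical

/-- Correctness of the fixpoint game fails on non-continuous lattices: if `L` is a
complete lattice with basis `B` (`⊥ ∉ B`) and `l₀` witnesses non-continuity, i.e.
`s := ⨆ {l' | l' ≪ l₀} ≠ l₀`, then the function `f(x) = s` if `x ⊑ s` and `f(x) = ⊤`
otherwise is monotone, its least fixpoint `μf = ⨅ {l | f l ≤ l}` equals `s`, and
there exists a basis element `b ∈ B` with `b ⊑ l₀` and `b ⋢ μf`. -/
theorem noncontinuous_counterexample {L : Type*} [CompleteLattice L] (B : Set L)
    (hbasis : ∀ l : L, l = sSup {b | b ∈ B ∧ b ≤ l})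
    (hbot : (⊥ : L) ∉ B)
    (l₀ : L) (h : sSup {l' : L | wayBelow l' l₀} ≠ l₀) :
    Monotone (fun x : L =>
        if x ≤ sSup {l' : L | wayBelow l' l₀} then sSup {l' : L | wayBelow l' l₀}
        else ⊤) ∧
    sInf {l : L |
        (if l ≤ sSup {l' : L | wayBelow l' l₀} then sSup {l' : L | wayBelow l' l₀}
         else ⊤) ≤ l} = sSup {l' : L | wayBelow l' l₀} ∧
    ∃ b ∈ B, b ≤ l₀ ∧ ¬ b ≤ sSup {l' : L | wayBelow l' l₀} := by
  set s := sSup {l' : L | wayBelow l' l₀} with hs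
  have hsle : s ≤ l₀ := by
    apply sSup_le
    intro a ha
    obtain ⟨d, hd, had⟩ := ha {l₀} ⟨l₀, rfl⟩
      (by intro x hx y hy; exact ⟨l₀, rfl, le_of_eq hx, le_of_eq hy⟩)
      (le_sSup rfl)
    simp only [Set.mem_singleton_iff] at hd
    exact hd ▸ had
  refine ⟨?_, ?_, ?_⟩
  · intro x y hxy
    by_cases hx : x ≤ s
    · by_cases hy : y ≤ s
      · simp [hx, hy]
      · simp [hx, hy]
    · have hy : ¬ y ≤ s := fun hy => hx (hxy.trans hy)
      simp [hx, hy]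
  · apply le_antisymm
    · exact sInf_le (by simp)
    · apply le_sInf
      intro l hl
      by_cases hls : l ≤ s
      · simpa [hls] using hl
      · simp only [Set.mem_setOf_eq, if_neg hls] at hl
        exact le_top.trans hl
  · by_contra hb
    push_neg at hb
    apply h
    apply le_antisymm hsle
    calc l₀ = sSup {b | b ∈ B ∧ b ≤ l₀} := hbasis l₀
      _ ≤ s := sSup_le fun b ⟨hbB, hbl⟩ => hb b hbB hbl
end

section
/- Let L be a complete lattice with basis B_L, and suppose b ∈ B_L is not compact (b ⋪ b). Then there is a monotone function f : L → L whose least fixpoint is ⊤ (so b ⊑ μf) constructed from a transfinite chain (d_α) witnessing non-compactness, namely f(x) = ⊤ if b ⊑ x and f(x) = d_α with α = min{β | d_β ⋢ x} otherwise; this f is well-defined, monotone, and ⊤ is its only fixpoint. -/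
open scoped Classical

/-- From a non-compact basis element `b` of a complete lattice, witnessed by a
transfinite chain `(d_α)` with `b ⊑ ⨆_α d_α` but `b ⋢ d_α` for all `α`, the function
`f(x) = ⊤` if `b ⊑ x` and `f(x) = d_α` with `α = min {β | d_β ⋢ x}` otherwise, is
well-defined (the minimized set is nonempty when `b ⋢ x`), monotone, has `⊤` as its
only fixpoint, and its least fixpoint `⨅ {l | f l ≤ l}` is `⊤` (so `b ⊑ μf`). -/
theorem noncompact_counterexample {L : Type*} [CompleteLattice L] (B : Set L)
    (hbasis : ∀ l : L, l = sSup {x | x ∈ B ∧ x ≤ l})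
    (b : L) (hb : b ∈ B)
    (d : Ordinal → L) (hd : Monotone d)
    (hsup : b ≤ sSup (Set.range d)) (hne : ∀ α : Ordinal, ¬ b ≤ d α) :
    (∀ x : L, ¬ b ≤ x → {β : Ordinal | ¬ d β ≤ x}.Nonempty) ∧
    Monotone (fun x : L => if b ≤ x then ⊤ else d (sInf {β : Ordinal | ¬ d β ≤ x})) ∧
    (∀ x : L, (if b ≤ x then (⊤ : L) else d (sInf {β : Ordinal | ¬ d β ≤ x})) = x ↔
        x = ⊤) ∧
    sInf {l : L | (if b ≤ l then (⊤ : L) else d (sInf {β : Ordinal | ¬ d β ≤ l})) ≤ l}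
      = ⊤ := by

  have hwd : ∀ x : L, ¬ b ≤ x → {β : Ordinal | ¬ d β ≤ x}.Nonempty := by
    intro x hx
    by_contra h
    apply hx
    refine le_trans hsup (sSup_le ?_)
    rintro _ ⟨β, rfl⟩
    by_contra hβ
    exact h ⟨β, hβ⟩
  have hmem : ∀ x : L, ¬ b ≤ x → ¬ d (sInf {β : Ordinal | ¬ d β ≤ x}) ≤ x := by
    intro x hx
    exact csInf_mem (hwd x hx)
  refine ⟨hwd, ?_, ?_, ?_⟩
  · intro x y hxy
    simp only
    by_cases hy : b ≤ y
    · simp [hy]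
    · have hx : ¬ b ≤ x := fun h => hy (h.trans hxy)
      simp only [hx, hy, if_false]
      apply hd
      apply csInf_le_csInf (OrderBot.bddBelow _) (hwd y hy)
      intro β hβ
      exact fun h => hβ (h.trans hxy)
  · intro x
    constructor
    · intro hfx
      by_cases hx : b ≤ x
      · simpa [hx] using hfx.symm
      · exfalso
        rw [if_neg hx] at hfx
        exact hmem x hx hfx.le
    · rintro rfl
      simp
  · refine top_unique (le_sInf ?_)
    intro l hl
    by_cases hx : b ≤ l
    · simpa [hx] using hl
    · rw [Set.mem_setOf_eq, if_neg hx] at hl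
      exact absurd hl (hmem l hx)
end

section
/- Let a₀ = 0 < a₁ < … < a_ℓ be reals in [0,1] and c ∈ (0,1]. Define decrease(v,b,l) to hold if (l = aᵢ for some i) or (a_ℓ ≤ b and b − l ≥ c(v − b)) or (aᵢ ≤ b < a_{i+1} and b − l ≥ c(a_{i+1} − b) for some i). Then decrease is well-founded: there do not exist v ∈ [0,1] and sequences (bᵐ), (lᵐ) in [0,1], m ∈ ℕ, with b^{m+1} < lᵐ ≤ bᵐ < v and decrease(v, bᵐ, lᵐ) for all m. -/
/-- The `decrease` predicate on `[0,1]`, determined by constants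
`a₀ = 0 < a₁ < … < a_ℓ` and `c`: `decrease v b l` holds if `l` equals some `aᵢ`,
or `a_ℓ ≤ b` and `b − l ≥ c(v − b)`, or `aᵢ ≤ b < a_{i+1}` and
`b − l ≥ c(a_{i+1} − b)` for some `i`. -/
def decrease (ℓ : ℕ) (a : Fin (ℓ + 1) → ℝ) (c v b l : ℝ) : Prop :=
  (∃ i : Fin (ℓ + 1), l = a i) ∨
  (a (Fin.last ℓ) ≤ b ∧ c * (v - b) ≤ b - l) ∨
  (∃ i : Fin ℓ, a i.castSucc ≤ b ∧ b < a i.succ ∧ c * (a i.succ - b) ≤ b - l)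

/-- Well-foundedness of the `decrease` predicate: for real constants
`a₀ = 0 < a₁ < … < a_ℓ` in `[0,1]` and `c ∈ (0,1]`, there do not exist `v ∈ [0,1]`
and sequences `(bᵐ)`, `(lᵐ)` in `[0,1]` with `b^{m+1} < lᵐ ≤ bᵐ < v` and
`decrease v bᵐ lᵐ` for all `m`. -/
theorem decrease_wellFounded (ℓ : ℕ) (a : Fin (ℓ + 1) → ℝ)
    (ha0 : a 0 = 0) (hmono : StrictMono a) (haI : ∀ i, a i ∈ Set.Icc (0:ℝ) 1)
    (c : ℝ) (hc0 : 0 < c) (hc1 : c ≤ 1) :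
    ¬ ∃ (v : ℝ) (b l : ℕ → ℝ), v ∈ Set.Icc (0:ℝ) 1 ∧
        (∀ m : ℕ, b m ∈ Set.Icc (0:ℝ) 1 ∧ l m ∈ Set.Icc (0:ℝ) 1) ∧
        (∀ m : ℕ, b (m + 1) < l m ∧ l m ≤ b m ∧ b m < v) ∧
        (∀ m : ℕ, decrease ℓ a c v (b m) (l m)) := by
  rintro ⟨v, b, l, hv, hbl, hseq, hdec⟩
  classical
  have hbmono : StrictAnti b :=
    strictAnti_nat_of_succ_lt fun m => lt_of_lt_of_le (hseq m).1 (hseq m).2.1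
  -- extended index function
  set A : ℕ → ℝ := fun j => a ⟨min j ℓ, by omega⟩ with hA
  have hAeq : ∀ (j : ℕ) (h : j ≤ ℓ), A j = a ⟨j, by omega⟩ := by
    intro j h; simp [hA, min_eq_left h]
  set idx : ℕ → ℕ := fun m => Nat.findGreatest (fun j => A j ≤ b m) ℓ with hidx
  have hidx_le : ∀ m, idx m ≤ ℓ := fun m => Nat.findGreatest_le ℓ
  have hA0 : ∀ m, A 0 ≤ b m := by
    intro m
    have h0 : A 0 = a 0 := by
      rw [hAeq 0 (Nat.zero_le ℓ)]; congr 1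
    rw [h0, ha0]; exact (hbl m).1.1
  have hidx_spec : ∀ m, A (idx m) ≤ b m := by
    intro m
    have := Nat.findGreatest_spec (P := fun j => A j ≤ b m) (Nat.zero_le ℓ) (hA0 m)
    simpa [hidx] using this
  have hidx_anti : ∀ {m m' : ℕ}, m ≤ m' → idx m' ≤ idx m := by
    intro m m' h
    exact Nat.findGreatest_mono (fun j hj => le_trans hj (hbmono.antitone h)) le_rfl
  -- eventually constant index
  obtain ⟨N, hN⟩ : ∃ N, idx N = sInf (Set.range idx) :=
    Nat.sInf_mem (⟨idx 0, 0, rfl⟩ : (Set.range idx).Nonempty)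
  set i₀ := idx N with hi₀
  have hconst : ∀ m, N ≤ m → idx m = i₀ := by
    intro m hm
    have h1 : idx m ≤ i₀ := hidx_anti hm
    have h2 : sInf (Set.range idx) ≤ idx m := Nat.sInf_le ⟨m, rfl⟩
    omega
  have hi₀ℓ : i₀ ≤ ℓ := hidx_le N
  have hib : ∀ m, N ≤ m → A i₀ ≤ b m := by
    intro m hm; have := hidx_spec m; rwa [hconst m hm] at this
  have hup : ∀ m, N ≤ m → ∀ j ≤ ℓ, A j ≤ b m → j ≤ i₀ := by
    intro m hm j hj hab
    have h := Nat.le_findGreatest (P := fun j => A j ≤ b m) hj hab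
    have he : idx m = Nat.findGreatest (fun j => A j ≤ b m) ℓ := rfl
    rw [← he, hconst m hm] at h
    exact h
  -- case 1 never occurs for m ≥ N
  have hnc1 : ∀ m, N ≤ m → ¬ ∃ j : Fin (ℓ + 1), l m = a j := by
    rintro m hm ⟨j, hj⟩
    have hjl : (j : ℕ) ≤ ℓ := by omega
    have h1 : A j ≤ b m := by
      rw [hAeq j hjl]
      have : a ⟨(j : ℕ), by omega⟩ = a j := by congr 1
      rw [this, ← hj]; exact (hseq m).2.1
    have hji : (j : ℕ) ≤ i₀ := hup m hm j hjl h1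
    have h2 : a j ≤ A i₀ := by
      rw [hAeq i₀ hi₀ℓ]
      have : a j = a ⟨(j : ℕ), by omega⟩ := by congr 1
      rw [this]; exact hmono.monotone (by simpa [Fin.le_def] using hji)
    have h3 : A i₀ ≤ b (m + 1) := hib (m + 1) (by omega)
    have h4 : b (m + 1) < a j := hj ▸ (hseq m).1
    linarith
  -- the target t
  have key : ∃ t : ℝ, t ≤ 1 ∧ ∀ m, N ≤ m → b m < t ∧ c * (t - b m) ≤ b m - l m := by
    rcases eq_or_lt_of_le hi₀ℓ with heq | hlt
    · -- i₀ = ℓ : target is v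
      refine ⟨v, hv.2, fun m hm => ⟨(hseq m).2.2, ?_⟩⟩
      rcases hdec m with h | ⟨_, h⟩ | ⟨i, h1, h2, h3⟩
      · exact absurd h (hnc1 m hm)
      · exact h
      · exfalso
        have hl : A i₀ = a (Fin.last ℓ) := by
          rw [hAeq i₀ hi₀ℓ]; congr 1; exact Fin.ext heq
        have h4 : a i.succ ≤ a (Fin.last ℓ) := hmono.monotone (Fin.le_last _)
        have h5 : A i₀ ≤ b m := hib m hm
        rw [hl] at h5; linarith
    · -- i₀ < ℓ : target is a (i₀ + 1)
      refine ⟨a ⟨i₀ + 1, by omega⟩, (haI _).2, fun m hm => ?_⟩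
      have hbt : b m < a ⟨i₀ + 1, by omega⟩ := by
        by_contra hcon
        push_neg at hcon
        have : A (i₀ + 1) ≤ b m := by rw [hAeq (i₀ + 1) (by omega)]; exact hcon
        have := hup m hm (i₀ + 1) (by omega) this
        omega
      refine ⟨hbt, ?_⟩
      rcases hdec m with h | ⟨h1, h2⟩ | ⟨i, h1, h2, h3⟩
      · exact absurd h (hnc1 m hm)
      · exfalso
        have : a ⟨i₀ + 1, by omega⟩ ≤ a (Fin.last ℓ) :=
          hmono.monotone (by simp [Fin.le_def, Fin.last]; omega)
        linarith
      · -- show i = i₀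
        have hiℓ : (i : ℕ) ≤ ℓ := by omega
        have hicast : A (i : ℕ) ≤ b m := by
          rw [hAeq (i : ℕ) hiℓ]
          have : a ⟨(i : ℕ), by omega⟩ = a i.castSucc := by congr 1
          rw [this]; exact h1
        have hii : (i : ℕ) ≤ i₀ := hup m hm i hiℓ hicast
        have hii' : i₀ ≤ (i : ℕ) := by
          by_contra hcon
          push_neg at hcon
          have hle : a i.succ ≤ a ⟨i₀, by omega⟩ :=
            hmono.monotone (by simp [Fin.le_def]; omega)
          have h5 : A i₀ ≤ b m := hib m hm
          rw [hAeq i₀ hi₀ℓ] at h5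
          linarith
        have hieq : a i.succ = a ⟨i₀ + 1, by omega⟩ := by
          congr 1; apply Fin.ext; simp [Fin.val_succ]; omega
        rw [← hieq]; exact h3
  obtain ⟨t, ht1, hkey⟩ := key
  -- geometric growth
  have hstep : ∀ m, N ≤ m → (1 + c) * (t - b m) ≤ t - b (m + 1) := by
    intro m hm
    have h1 := (hkey m hm).2
    have h2 := (hseq m).1
    nlinarith
  have hpow : ∀ n : ℕ, (1 + c) ^ n * (t - b N) ≤ t - b (N + n) := by
    intro n
    induction n with
    | zero => simp
    | succ n ih =>
      have h1 : (1 + c) * ((1 + c) ^ n * (t - b N)) ≤ (1 + c) * (t - b (N + n)) :=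
        mul_le_mul_of_nonneg_left ih (by linarith)
      have h2 := hstep (N + n) (by omega)
      calc (1 + c) ^ (n + 1) * (t - b N)
          = (1 + c) * ((1 + c) ^ n * (t - b N)) := by ring
        _ ≤ (1 + c) * (t - b (N + n)) := h1
        _ ≤ t - b (N + n + 1) := h2
  have hd : 0 < t - b N := by have := (hkey N le_rfl).1; linarith
  obtain ⟨n, hn⟩ := pow_unbounded_of_one_lt (1 / (t - b N)) (by linarith : (1:ℝ) < 1 + c)
  have h1 : 1 < (1 + c) ^ n * (t - b N) := (div_lt_iff₀ hd).mp hn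
  have h2 : t - b (N + n) ≤ 1 := by
    have := (hbl (N + n)).1.1
    linarith
  have := hpow n
  linarith
end
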